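/- arXiv:2603.01670 — 2 statements merged into one kernel-verified Lean document; each statement's English description precedes it below -/
import Mathlib

section
/- Let A and B be n × n complex matrices and let I_r = {i_1,...,i_r} ⊆ [n] be a set of r distinct indices. Then |det(A_{I_r}) − det(B_{I_r})| ≤ r! · Σ_{j=1}^r (max_{k,l} |A_{k,l}|)^{j−1} · (max_{k,l} |A_{k,l} − B_{k,l}|) · (max_{k,l} |B_{k,l}|)^{r−j}, where M_{I_r} denotes the r × r submatrix of M restricted to rows and columns indexed by I_r. -/
lemma abs_det_le_of_col_bound {r : ℕ} (M : Matrix (Fin r) (Fin r) ℂ) (g : Fin r → ℝ)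
    (hg0 : ∀ k, 0 ≤ g k) (hg : ∀ i k, ‖M i k‖ ≤ g k) :
    ‖M.det‖ ≤ (r.factorial : ℝ) * ∏ k, g k := by
  rw [Matrix.det_apply]
  refine (norm_sum_le _ _).trans ?_
  have key : ∀ σ : Equiv.Perm (Fin r),
      ‖Equiv.Perm.sign σ • ∏ i, M (σ i) i‖ ≤ ∏ k, g k := by
    intro σ
    have h1 : ‖Equiv.Perm.sign σ • ∏ i, M (σ i) i‖
        = ‖∏ i, M (σ i) i‖ := by
      rcases Int.units_eq_one_or (Equiv.Perm.sign σ) with h | h <;>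
        simp [h, Units.smul_def]
    rw [h1, norm_prod]
    exact Finset.prod_le_prod (fun i _ => norm_nonneg _) (fun i _ => hg _ _)
  calc ∑ σ : Equiv.Perm (Fin r), ‖Equiv.Perm.sign σ • ∏ i, M (σ i) i‖
      ≤ ∑ _σ : Equiv.Perm (Fin r), ∏ k, g k := Finset.sum_le_sum (fun σ _ => key σ)
    _ = (r.factorial : ℝ) * ∏ k, g k := by
        simp [Finset.sum_const, Fintype.card_perm, mul_comm]

/-- Uniform determinant stability bound for submatrices on a set of `r` distinct indices. -/
theorem det_submatrix_diff_le (n r : ℕ) (A B : Matrix (Fin n) (Fin n) ℂ)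
    (e : Fin r → Fin n) (he : Function.Injective e) :
    ‖(A.submatrix e e).det - (B.submatrix e e).det‖ ≤
      (r.factorial : ℝ) *
        ∑ j ∈ Finset.range r,
          (⨆ k : Fin n, ⨆ l : Fin n, ‖A k l‖) ^ j *
            (⨆ k : Fin n, ⨆ l : Fin n, ‖A k l - B k l‖) *
            (⨆ k : Fin n, ⨆ l : Fin n, ‖B k l‖) ^ (r - 1 - j) := by
  set a := ⨆ k : Fin n, ⨆ l : Fin n, ‖A k l‖ with ha_def
  set d := ⨆ k : Fin n, ⨆ l : Fin n, ‖A k l - B k l‖ with hd_def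
  set b := ⨆ k : Fin n, ⨆ l : Fin n, ‖B k l‖ with hb_def
  have hle : ∀ (f : Fin n → Fin n → ℝ) (k l : Fin n), f k l ≤ ⨆ k, ⨆ l, f k l := by
    intro f k l
    calc f k l ≤ ⨆ l, f k l := le_ciSup (Set.Finite.bddAbove (Set.finite_range _)) l
      _ ≤ ⨆ k, ⨆ l, f k l :=
        le_ciSup (f := fun k => ⨆ l, f k l) (Set.Finite.bddAbove (Set.finite_range _)) k
  have ha0 : 0 ≤ a := Real.iSup_nonneg fun k =>
    Real.iSup_nonneg fun l => norm_nonneg _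
  have hd0 : 0 ≤ d := Real.iSup_nonneg fun k =>
    Real.iSup_nonneg fun l => norm_nonneg _
  have hb0 : 0 ≤ b := Real.iSup_nonneg fun k =>
    Real.iSup_nonneg fun l => norm_nonneg _
  set A' := A.submatrix e e with hA'
  set B' := B.submatrix e e with hB'
  set C : ℕ → Matrix (Fin r) (Fin r) ℂ :=
    fun j => Matrix.of fun i k => if (k : ℕ) < j then A' i k else B' i k with hC
  have hC0 : C 0 = B' := by
    ext i k; simp [hC]
  have hCr : C r = A' := by
    ext i k; simp [hC, k.isLt]
  have key : A'.det - B'.det = ∑ j ∈ Finset.range r, ((C (j + 1)).det - (C j).det) := by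
    rw [Finset.sum_range_sub (fun j => (C j).det), hC0, hCr]
  rw [key]
  refine le_trans (norm_sum_le _ _) ?_
  rw [Finset.mul_sum]
  refine Finset.sum_le_sum ?_
  intro j hj
  have hjr : j < r := Finset.mem_range.mp hj
  set jf : Fin r := ⟨j, hjr⟩ with hjf
  -- identify C (j+1) and C j as column updates of C j
  have h1 : C (j + 1) = (C j).updateCol jf (fun i => A' i jf) := by
    ext i k
    by_cases hk : k = jf
    · subst hk; simp [hC, Matrix.updateCol_apply, hjf]
    · have hk' : (k : ℕ) ≠ j := fun h => hk (Fin.ext h)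
      have : (k : ℕ) < j + 1 ↔ (k : ℕ) < j := by omega
      simp [hC, Matrix.updateCol_apply, hk, this]
  have h2 : (C j).updateCol jf (fun i => B' i jf) = C j := by
    ext i k
    by_cases hk : k = jf
    · subst hk; simp [hC, Matrix.updateCol_apply, hjf]
    · simp [Matrix.updateCol_apply, hk]
  have hdiff : (C (j + 1)).det - (C j).det
      = ((C j).updateCol jf (fun i => A' i jf - B' i jf)).det := by
    have hadd := Matrix.det_updateCol_add (C j) jf
      (fun i => A' i jf - B' i jf) (fun i => B' i jf)
    have hfun : (fun i => A' i jf - B' i jf) + (fun i => B' i jf)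
        = fun i => A' i jf := by
      funext i; simp
    rw [hfun] at hadd
    rw [h1, hadd, h2]; ring
  rw [hdiff]
  -- bound the determinant of the mixed matrix
  set G : ℕ → ℝ := fun k => if k < j then a else if k = j then d else b with hG
  have hG0 : ∀ k, 0 ≤ G k := by
    intro k; simp only [hG]; split_ifs <;> assumption
  have hbound : ∀ i k, ‖((C j).updateCol jf
      (fun i => A' i jf - B' i jf)) i k‖ ≤ G (k : ℕ) := by
    intro i k
    by_cases hk : k = jf
    · subst hk
      have hGk : G (jf : ℕ) = d := by simp [hG, hjf]
      rw [hGk, Matrix.updateCol_apply, if_pos rfl]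
      exact hle (fun k l => ‖A k l - B k l‖) (e i) (e jf)
    · have hk' : (k : ℕ) ≠ j := fun h => hk (Fin.ext h)
      rw [Matrix.updateCol_apply, if_neg hk]
      by_cases hlt : (k : ℕ) < j
      · have hGk : G (k : ℕ) = a := by simp [hG, hlt]
        rw [hGk]
        simp only [hC, Matrix.of_apply, if_pos hlt]
        exact hle (fun k l => ‖A k l‖) (e i) (e k)
      · have hGk : G (k : ℕ) = b := by simp [hG, hlt, hk']
        rw [hGk]
        simp only [hC, Matrix.of_apply, if_neg hlt]
        exact hle (fun k l => ‖B k l‖) (e i) (e k)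
  refine le_trans (abs_det_le_of_col_bound _ (fun k => G (k : ℕ))
    (fun k => hG0 _) hbound) ?_
  have hprod : (∏ k : Fin r, G (k : ℕ)) = a ^ j * d * b ^ (r - 1 - j) := by
    rw [Fin.prod_univ_eq_prod_range G r,
      ← Finset.prod_range_mul_prod_Ico G (Nat.succ_le_of_lt hjr),
      Finset.prod_range_succ]
    have e1 : ∏ k ∈ Finset.range j, G k = a ^ j := by
      rw [Finset.prod_congr rfl (fun k hk => show G k = a by
        simp [hG, Finset.mem_range.mp hk]), Finset.prod_const, Finset.card_range]
    have e2 : G j = d := by simp [hG]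
    have e3 : ∏ k ∈ Finset.Ico (j + 1) r, G k = b ^ (r - 1 - j) := by
      rw [Finset.prod_congr rfl (fun k hk => show G k = b by
        have := Finset.mem_Ico.mp hk
        have h1 : ¬ k < j := by omega
        have h2 : k ≠ j := by omega
        simp [hG, h1, h2]), Finset.prod_const, Nat.card_Ico]
      congr 1
      omega
    rw [e1, e2, e3]
  rw [hprod]
end

section
/- For positive integers r ≤ n, the number of non-injective functions from a set of r elements into a set of n elements satisfies n^r − n(n−1)⋯(n−r+1) ≤ 2^{r−1} · n^{r−1}. -/
lemma aux_pow_le (n : ℕ) : ∀ r, 1 ≤ r →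
    n ^ r ≤ n.descFactorial r + 2 ^ (r - 1) * n ^ (r - 1) := by
  intro r hr
  induction r, hr using Nat.le_induction with
  | base => simp
  | succ r hr ih =>
    have h1 : n ^ (r + 1) ≤ n * n.descFactorial r + 2 ^ (r - 1) * n ^ r := by
      calc n ^ (r + 1) = n * n ^ r := by ring
        _ ≤ n * (n.descFactorial r + 2 ^ (r - 1) * n ^ (r - 1)) :=
            Nat.mul_le_mul_left n ih
        _ = n * n.descFactorial r + 2 ^ (r - 1) * (n * n ^ (r - 1)) := by ring
        _ = n * n.descFactorial r + 2 ^ (r - 1) * n ^ r := by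
            rw [← pow_succ', Nat.sub_add_cancel hr]
    have h2 : n * n.descFactorial r ≤ n.descFactorial (r + 1) + r * n.descFactorial r := by
      have : n ≤ (n - r) + r := by omega
      calc n * n.descFactorial r ≤ ((n - r) + r) * n.descFactorial r :=
            Nat.mul_le_mul_right _ this
        _ = (n - r) * n.descFactorial r + r * n.descFactorial r := by ring
        _ = n.descFactorial (r + 1) + r * n.descFactorial r := by
            rw [Nat.descFactorial_succ]
    have h3 : r * n.descFactorial r ≤ 2 ^ (r - 1) * n ^ r := by
      have hr2 : r ≤ 2 ^ (r - 1) := by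
        have := @Nat.lt_two_pow_self (r - 1)
        omega
      exact Nat.mul_le_mul hr2 (Nat.descFactorial_le_pow n r)
    have h4 : 2 ^ (r - 1) * n ^ r + 2 ^ (r - 1) * n ^ r ≤ 2 ^ r * n ^ r := by
      have : 2 ^ (r - 1) + 2 ^ (r - 1) ≤ 2 ^ r := by
        have : 2 ^ (r - 1) * 2 = 2 ^ r := by
          rw [← pow_succ]; congr 1; omega
        omega
      calc 2 ^ (r - 1) * n ^ r + 2 ^ (r - 1) * n ^ r
          = (2 ^ (r - 1) + 2 ^ (r - 1)) * n ^ r := by ring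
        _ ≤ 2 ^ r * n ^ r := Nat.mul_le_mul_right _ this
    simp only [Nat.add_sub_cancel]
    omega

/-- The number of non-injective functions from an `r`-element set to an `n`-element set
is at most `2^(r-1) · n^(r-1)`. -/
theorem noninjective_count_le (r n : ℕ) (hr : 1 ≤ r) (hrn : r ≤ n) :
    n ^ r - n.descFactorial r ≤ 2 ^ (r - 1) * n ^ (r - 1) := by
  have := aux_pow_le n r hr
  omega
end
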